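/- Let b₀₀, b₀₁, b₁₀, b₁₁ ∈ ℝ and define f(u₁, u₂) = b₀₀ + b₀₁ u₁ + b₁₀ u₂ + b₁₁ u₁u₂ for complex u₁, u₂, and let R_f = ⋃_{|u₁|=|u₂|=1} {f(u₁,u₂), -f(u₁,u₂)}. Then R_f equals the closed unit disk {z ∈ ℂ : |z| ≤ 1} if and only if b₀₀ = 0, one of b₀₁, b₁₀, b₁₁ is 0, and the other two are each ±1/2. -/

import Mathlib

set_option maxHeartbeats 1000000

open Complex

private lemma unit_re_im (u : ℂ) (hu : ‖u‖ = 1) : u.re^2 + u.im^2 = 1 := by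
  have h := Complex.sq_norm u
  rw [hu, Complex.normSq_apply] at h
  nlinarith [h]

private lemma abs_lin (p q : ℝ) (u : ℂ) (hu : ‖u‖ = 1) :
    ‖(p:ℂ) + q*u‖ = Real.sqrt (p^2+q^2+2*p*q*u.re) := by
  have h := unit_re_im u hu
  rw [Complex.norm_def, Complex.normSq_apply]
  congr 1
  simp
  ring_nf
  nlinarith [h]

private lemma Pnonneg (p q c : ℝ) (hc : c^2 ≤ 1) : 0 ≤ p^2+q^2+2*p*q*c := by
  nlinarith [sq_nonneg (p+q*c), mul_nonneg (sq_nonneg q) (by linarith : (0:ℝ) ≤ 1 - c^2)]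

private lemma sq_eq_from (r s c : ℝ) (hc : c^2 ≤ 1) (h : r^2+s^2+2*r*s*c = 0) : r^2 = s^2 := by
  have h2 : (r^2+s^2)^2 = 4*(r*s)^2*c^2 := by linear_combination (r^2+s^2-2*r*s*c)*h
  have h4 : (r^2-s^2)^2 ≤ 0 := by nlinarith [sq_nonneg (r*s), h2, hc]
  have h5 : (r^2-s^2)^2 = 0 := le_antisymm h4 (sq_nonneg _)
  have := pow_eq_zero_iff (n := 2) (by norm_num) |>.mp h5
  linarith

private lemma mid_eq (P₀ P₁ Q₀ Q₁ : ℝ) (hP₀ : 0 ≤ P₀) (hP₁ : 0 ≤ P₁) (hQ₀ : 0 ≤ Q₀) (hQ₁ : 0 ≤ Q₁)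
    (e₀ : Real.sqrt P₀ + Real.sqrt Q₀ = 1) (e₁ : Real.sqrt P₁ + Real.sqrt Q₁ = 1)
    (hm : Real.sqrt ((P₀+P₁)/2) + Real.sqrt ((Q₀+Q₁)/2) ≤ 1) : P₀ = P₁ ∧ Q₀ = Q₁ := by
  set X₀ := Real.sqrt P₀ with hX₀
  set X₁ := Real.sqrt P₁
  set Y₀ := Real.sqrt Q₀
  set Y₁ := Real.sqrt Q₁
  have sX₀ : X₀^2 = P₀ := Real.sq_sqrt hP₀
  have sX₁ : X₁^2 = P₁ := Real.sq_sqrt hP₁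
  have sY₀ : Y₀^2 = Q₀ := Real.sq_sqrt hQ₀
  have sY₁ : Y₁^2 = Q₁ := Real.sq_sqrt hQ₁
  have nX₀ : 0 ≤ X₀ := Real.sqrt_nonneg _
  have nX₁ : 0 ≤ X₁ := Real.sqrt_nonneg _
  have nY₀ : 0 ≤ Y₀ := Real.sqrt_nonneg _
  have nY₁ : 0 ≤ Y₁ := Real.sqrt_nonneg _
  have hA : (X₀+X₁)/2 ≤ Real.sqrt ((P₀+P₁)/2) := by
    rw [show (P₀+P₁)/2 = (X₀^2+X₁^2)/2 by rw [sX₀, sX₁],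
      show (X₀+X₁)/2 = Real.sqrt (((X₀+X₁)/2)^2) from (Real.sqrt_sq (by positivity)).symm]
    exact Real.sqrt_le_sqrt (by nlinarith [sq_nonneg (X₀ - X₁)])
  have hB : (Y₀+Y₁)/2 ≤ Real.sqrt ((Q₀+Q₁)/2) := by
    rw [show (Q₀+Q₁)/2 = (Y₀^2+Y₁^2)/2 by rw [sY₀, sY₁],
      show (Y₀+Y₁)/2 = Real.sqrt (((Y₀+Y₁)/2)^2) from (Real.sqrt_sq (by positivity)).symm]
    exact Real.sqrt_le_sqrt (by nlinarith [sq_nonneg (Y₀ - Y₁)])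
  have hAe : Real.sqrt ((P₀+P₁)/2) = (X₀+X₁)/2 := by linarith
  have hX : X₀ = X₁ := by
    have := Real.sq_sqrt (by linarith : (0:ℝ) ≤ (P₀+P₁)/2)
    rw [hAe] at this
    nlinarith [sq_nonneg (X₀ - X₁)]
  have hY : Y₀ = Y₁ := by linarith
  constructor
  · rw [← sX₀, ← sX₁, hX]
  · rw [← sY₀, ← sY₁, hY]

private lemma contra_lem (p q r s ε : ℝ) (hε : ε = 1 ∨ ε = -1) (hq : q ≠ 0) (hpq : p = -(ε*q))
    (hQ1 : r^2+s^2+2*r*s*ε = 1)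
    (L1 : ∀ c : ℝ, c^2 ≤ 1 →
      Real.sqrt (p^2+q^2+2*p*q*c) + Real.sqrt (r^2+s^2+2*r*s*c) ≤ 1) : False := by
  have hε2 : ε^2 = 1 := by rcases hε with h | h <;> rw [h] <;> ring
  have hp : p ≠ 0 := by
    rcases hε with h | h <;> rw [h] at hpq <;> simp [hpq] <;> simpa using hq
  have hp2 : 0 < p^2 := by positivity
  set K := ε*r*s with hK
  set D := (K + p^2)^2 with hD
  set m := min (p^2/(D+1)) 1 with hm
  have hD0 : 0 ≤ D := sq_nonneg _
  have hm0 : 0 < m := by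
    apply lt_min _ one_pos
    positivity
  have hm1 : m ≤ 1 := min_le_right _ _
  have hmD : m * (D+1) ≤ p^2 := by
    have h1 : m ≤ p^2/(D+1) := min_le_left _ _
    rw [le_div_iff₀ (by positivity : (0:ℝ) < D+1)] at h1
    linarith
  clear_value m
  set c := ε*(1-m) with hc
  have hc2 : c^2 ≤ 1 := by
    rw [hc]
    have : (ε*(1-m))^2 = (1-m)^2 := by rw [mul_pow, hε2]; ring
    rw [this]; nlinarith
  have hPc : p^2+q^2+2*p*q*c = 2*p^2*m := by
    rcases hε with h | h <;> rw [h] at hpq hc <;> rw [hpq, hc] <;> ring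
  have hQc : r^2+s^2+2*r*s*c = 1 - 2*K*m := by
    rw [hc, hK]; nlinarith [hQ1, hε2]
  have hQc0 : 0 ≤ 1 - 2*K*m := by
    rw [← hQc]
    nlinarith [sq_nonneg (r+s*c), mul_nonneg (sq_nonneg s) (by linarith : (0:ℝ) ≤ 1 - c^2)]
  have hL := L1 c hc2
  rw [hPc, hQc] at hL
  clear_value c
  clear_value K
  clear_value D
  set T := Real.sqrt (2*p^2*m) with hT
  set S := Real.sqrt (1-2*K*m) with hS
  have hT2 : T^2 = 2*p^2*m := Real.sq_sqrt (by positivity)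
  have hS2 : S^2 = 1-2*K*m := Real.sq_sqrt hQc0
  have hT0 : 0 ≤ T := Real.sqrt_nonneg _
  have hS0 : 0 ≤ S := Real.sqrt_nonneg _
  clear_value T S
  have h1 : T ≤ 1 - S := by linarith
  have h2 : T^2 ≤ (1-S)^2 := pow_le_pow_left₀ hT0 h1 2
  have h3 : S ≤ 1 - (K+p^2)*m := by nlinarith
  have h4 : S^2 ≤ (1 - (K+p^2)*m)^2 := pow_le_pow_left₀ hS0 h3 2
  -- expand: 1-2Km ≤ 1 - 2(K+p²)m + D m² ⇒ 2p²m ≤ D m²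
  have h5 : 2*p^2*m ≤ D*m^2 := by nlinarith [h4, hS2]
  -- but D*m ≤ m*(D+1) - m ≤ p² - m < p², so D*m² < p²*m, i.e. 2p²m ≤ < p² m ⇒ contra
  have h6 : D*m^2 ≤ (p^2 - m)*m := by nlinarith [mul_le_mul_of_nonneg_right hmD (le_of_lt hm0)]
  nlinarith [h5, h6, mul_pos hm0 hm0, mul_pos hp2 hm0]

private lemma cover1 (α β : ℝ) (hα : α^2 = 1/4) (hβ : β^2 = 1/4) (z : ℂ) (hz : ‖z‖ ≤ 1) :
    ∃ u v : ℂ, ‖u‖ = 1 ∧ ‖v‖ = 1 ∧ z = u * (↑α + ↑β*v) := by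
  set ρ := ‖z‖ with hρ
  have hρ0 : 0 ≤ ρ := norm_nonneg z
  have hρ2 : ρ^2 ≤ 1 := by nlinarith
  set x := 4*α*β*(2*ρ^2-1) with hx
  have hx2 : x^2 ≤ 1 := by
    have h1 : x^2 = (2*ρ^2-1)^2 := by
      rw [hx]
      linear_combination (16*β^2*(2*ρ^2-1)^2)*hα + (4*(2*ρ^2-1)^2)*hβ
    nlinarith [h1, hρ2, sq_nonneg ρ]
  set y := Real.sqrt (1-x^2) with hy
  have hy2 : y^2 = 1 - x^2 := Real.sq_sqrt (by linarith)
  set v : ℂ := ⟨x, y⟩ with hv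
  have hv1 : ‖v‖ = 1 := by
    rw [Complex.norm_def, Complex.normSq_apply]
    simp only [hv]
    rw [show x*x + y*y = 1 by nlinarith [hy2]]
    exact Real.sqrt_one
  have hvre : v.re = x := rfl
  have habs : ‖↑α + ↑β*v‖ = ρ := by
    rw [abs_lin α β v hv1, hvre]
    rw [show α^2+β^2+2*α*β*x = ρ^2 by
      rw [hx]; linear_combination (1 + 8*(2*ρ^2-1)*β^2)*hα + (1+2*(2*ρ^2-1))*hβ]
    exact Real.sqrt_sq hρ0
  by_cases hz0 : z = 0
  · refine ⟨1, v, by simp, hv1, ?_⟩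
    have h00 : ρ = 0 := by rw [hρ, hz0]; simp
    have h0 : (↑α + ↑β*v) = 0 := by
      apply norm_eq_zero.mp; rw [habs, h00]
    rw [hz0, h0]; ring
  · have hd0 : (↑α + ↑β*v) ≠ 0 := by
      intro h
      apply hz0
      apply norm_eq_zero.mp
      rw [← hρ, ← habs, h, norm_zero]
    have hρne : ρ ≠ 0 := fun h => hz0 (norm_eq_zero.mp (by rw [← hρ]; exact h))
    refine ⟨z / (↑α + ↑β*v), v, ?_, hv1, ?_⟩
    · rw [norm_div, habs, ← hρ, div_self hρne]
    · field_simp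

private lemma cover2 (q r : ℝ) (hq : q^2 = 1/4) (hr : r^2 = 1/4) (z : ℂ) (hz : ‖z‖ ≤ 1) :
    ∃ u₁ u₂ : ℂ, ‖u₁‖ = 1 ∧ ‖u₂‖ = 1 ∧ z = ↑q*u₁ + ↑r*u₂ := by
  have hq0 : q ≠ 0 := by intro h; rw [h] at hq; norm_num at hq
  have hr0 : r ≠ 0 := by intro h; rw [h] at hr; norm_num at hr
  have hrC : (r:ℂ) ≠ 0 := Complex.ofReal_ne_zero.mpr hr0
  by_cases hz0 : z = 0
  · refine ⟨1, -(↑q/↑r), by simp, ?_, ?_⟩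
    · rw [norm_neg, norm_div, Complex.norm_real, Real.norm_eq_abs, Complex.norm_real, Real.norm_eq_abs,
        div_eq_one_iff_eq (by simpa using hr0)]
      have h2 : |q|^2 = |r|^2 := by rw [_root_.sq_abs, _root_.sq_abs, hq, hr]
      nlinarith [abs_nonneg q, abs_nonneg r, h2]
    · rw [hz0]; field_simp; ring
  · set ρ := ‖z‖ with hρ
    clear_value ρ
    have hρ0 : 0 < ρ := hρ ▸ norm_pos_iff.mpr hz0
    have hρne : ρ ≠ 0 := ne_of_gt hρ0
    have hρ2 : ρ^2 ≤ 1 := by nlinarith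
    have h1ρ : (Real.sqrt (1-ρ^2))^2 = 1-ρ^2 := Real.sq_sqrt (by linarith)
    set g := Real.sqrt (1-ρ^2) / ρ with hg
    have hgg : 1 + g*g = (1/ρ)^2 := by
      rw [hg]; field_simp; linear_combination h1ρ
    have hsq : Real.sqrt ((1/ρ)^2) = 1/ρ := Real.sqrt_sq (le_of_lt (one_div_pos.mpr hρ0))
    have habsg : ‖1+↑g*I‖ = 1/ρ := by
      rw [Complex.norm_def, Complex.normSq_apply]
      simp
      rw [hgg, hsq]
      norm_num
    have habsg' : ‖1-↑g*I‖ = 1/ρ := by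
      rw [Complex.norm_def, Complex.normSq_apply]
      simp
      rw [hgg, hsq]
      norm_num
    have habs2q : ‖((2*q:ℝ):ℂ)‖ = 1 := by
      rw [Complex.norm_real, Real.norm_eq_abs]
      nlinarith [abs_nonneg (2*q), _root_.sq_abs (2*q)]
    have habs2r : ‖((2*r:ℝ):ℂ)‖ = 1 := by
      rw [Complex.norm_real, Real.norm_eq_abs]
      nlinarith [abs_nonneg (2*r), _root_.sq_abs (2*r)]
    have hq2 : (q:ℂ)^2 = 1/4 := by
      calc (q:ℂ)^2 = ((q^2:ℝ):ℂ) := by push_cast; ring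
      _ = 1/4 := by rw [hq]; norm_num
    have hr2 : (r:ℂ)^2 = 1/4 := by
      calc (r:ℂ)^2 = ((r^2:ℝ):ℂ) := by push_cast; ring
      _ = 1/4 := by rw [hr]; norm_num
    refine ⟨((2*q:ℝ):ℂ)*(z*(1+↑g*I)), ((2*r:ℝ):ℂ)*(z*(1-↑g*I)), ?_, ?_, ?_⟩
    · rw [norm_mul, norm_mul, habsg, habs2q, ← hρ]
      field_simp
    · rw [norm_mul, norm_mul, habsg', habs2r, ← hρ]
      field_simp
    · push_cast
      linear_combination (-2*z*(1+↑g*I))*hq2 + (-2*z*(1-↑g*I))*hr2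

private lemma align (a b : ℂ)
    (key : ∀ u₂ : ℂ, ‖u₂‖ = 1 → ‖a + b*u₂‖ ≤ 1) :
    ‖a‖ + ‖b‖ ≤ 1 := by
  by_cases hb : b = 0
  · have := key 1 (by simp)
    simp [hb] at this ⊢
    exact this
  by_cases ha : a = 0
  · have := key 1 (by simp)
    simp [ha] at this ⊢
    exact this
  have hA0 : ‖a‖ ≠ 0 := by simpa [norm_eq_zero] using ha
  have hB0 : ‖b‖ ≠ 0 := by simpa [norm_eq_zero] using hb
  have hmc : b * ((starRingEnd ℂ) b) = ((‖b‖ : ℝ) : ℂ)^2 := by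
    rw [Complex.mul_conj, Complex.normSq_eq_norm_sq]
    push_cast
    ring
  have hAC : ((‖a‖ : ℝ) : ℂ) ≠ 0 := Complex.ofReal_ne_zero.mpr hA0
  have hBC : ((‖b‖ : ℝ) : ℂ) ≠ 0 := Complex.ofReal_ne_zero.mpr hB0
  set u₂ : ℂ := (a * (starRingEnd ℂ) b) / ((‖a‖ * ‖b‖ : ℝ) : ℂ) with hu₂
  have h2 : ‖u₂‖ = 1 := by
    rw [hu₂, norm_div, norm_mul, Complex.norm_conj, Complex.norm_real, Real.norm_eq_abs,
      _root_.abs_of_nonneg (by positivity)]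
    field_simp
  have hbu : a + b * u₂ = a * ((1 + ‖b‖ / ‖a‖ : ℝ) : ℂ) := by
    rw [hu₂]
    push_cast
    field_simp
    linear_combination hmc
  have habs : ‖a + b*u₂‖ = ‖a‖ + ‖b‖ := by
    rw [hbu, norm_mul, Complex.norm_real, Real.norm_eq_abs, _root_.abs_of_nonneg (by positivity)]
    field_simp
  have := key u₂ h2
  rwa [habs] at this

private lemma tri_eq (z a w : ℂ) (hz : ‖z‖ = 1) (hzz : z = a + w)
    (hle : ‖a‖ + ‖w‖ ≤ 1) :
    z * ↑(‖a‖) = a ∧ ‖a‖ + ‖w‖ = 1 := by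
  have h1 : ‖a+w‖ = 1 := by rw [← hzz]; exact hz
  have heq : ‖a+w‖ = ‖a‖ + ‖w‖ := by
    refine le_antisymm (norm_add_le a w) ?_
    rw [h1]; exact hle
  have hsum : ‖a‖ + ‖w‖ = 1 := by rw [← heq, h1]
  refine ⟨?_, hsum⟩
  by_cases ha : a = 0
  · simp [ha]
  · have hsr : SameRay ℝ a w := by
      rw [sameRay_iff_norm_add]
      simpa using heq
    obtain ⟨t, ht0, htw⟩ := hsr.exists_nonneg_left ha
    have hw : w = (t:ℂ) * a := by rw [← htw, Complex.real_smul]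
    have habsw : ‖w‖ = t * ‖a‖ := by
      rw [hw, norm_mul, Complex.norm_real, Real.norm_eq_abs, _root_.abs_of_nonneg ht0]
    have key : (1+t) * ‖a‖ = 1 := by rw [habsw] at hsum; linarith
    have hza : z = ((1+t:ℝ):ℂ) * a := by rw [hzz, hw]; push_cast; ring
    rw [hza]
    have h5 : ((1+t:ℝ):ℂ) * a * ↑(‖a‖) = ↑((1+t) * ‖a‖) * a := by
      push_cast; ring
    rw [h5, key]
    simp

theorem bilinear_range_eq_unit_disk (b₀₀ b₀₁ b₁₀ b₁₁ : ℝ) :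
    ({z : ℂ | ∃ u₁ u₂ : ℂ, ‖u₁‖ = 1 ∧ ‖u₂‖ = 1 ∧
        (z = b₀₀ + b₀₁ * u₁ + b₁₀ * u₂ + b₁₁ * (u₁ * u₂) ∨
          z = -(b₀₀ + b₀₁ * u₁ + b₁₀ * u₂ + b₁₁ * (u₁ * u₂)))} =
      {z : ℂ | ‖z‖ ≤ 1}) ↔
    (b₀₀ = 0 ∧
      ((b₀₁ = 0 ∧ (b₁₀ = 1 / 2 ∨ b₁₀ = -(1 / 2)) ∧ (b₁₁ = 1 / 2 ∨ b₁₁ = -(1 / 2))) ∨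
        (b₁₀ = 0 ∧ (b₀₁ = 1 / 2 ∨ b₀₁ = -(1 / 2)) ∧ (b₁₁ = 1 / 2 ∨ b₁₁ = -(1 / 2))) ∨
        (b₁₁ = 0 ∧ (b₀₁ = 1 / 2 ∨ b₀₁ = -(1 / 2)) ∧ (b₁₀ = 1 / 2 ∨ b₁₀ = -(1 / 2))))) := by
  constructor
  · -- forward direction
    intro H
    have Hiff := Set.ext_iff.mp H
    have HA : ∀ u₁ u₂ : ℂ, ‖u₁‖ = 1 → ‖u₂‖ = 1 →
        ‖↑b₀₀ + ↑b₀₁*u₁ + ↑b₁₀*u₂ + ↑b₁₁*(u₁*u₂)‖ ≤ 1 := by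
      intro u₁ u₂ h1 h2
      exact (Hiff _).mp ⟨u₁, u₂, h1, h2, Or.inl rfl⟩
    have HB : ∀ z : ℂ, ‖z‖ ≤ 1 → ∃ u₁ u₂ : ℂ, ‖u₁‖ = 1 ∧ ‖u₂‖ = 1 ∧
        (z = ↑b₀₀ + ↑b₀₁*u₁ + ↑b₁₀*u₂ + ↑b₁₁*(u₁*u₂) ∨
          z = -(↑b₀₀ + ↑b₀₁*u₁ + ↑b₁₀*u₂ + ↑b₁₁*(u₁*u₂))) :=
      fun z hz => (Hiff z).mpr hz
    clear H Hiff
    set p := b₀₀ with hp'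
    set q := b₀₁ with hq'
    set r := b₁₀ with hr'
    set s := b₁₁ with hs'
    have L1 : ∀ u₁ : ℂ, ‖u₁‖ = 1 →
        ‖(p:ℂ) + ↑q*u₁‖ + ‖(r:ℂ)+↑s*u₁‖ ≤ 1 := by
      intro u₁ h1
      apply align
      intro u₂ h2
      have h := HA u₁ u₂ h1 h2
      rwa [show (p:ℂ) + ↑q*u₁ + ↑r*u₂ + ↑s*(u₁*u₂) = ((p:ℂ)+↑q*u₁) + ((r:ℂ)+↑s*u₁)*u₂ from by
        ring] at h
    have L1R : ∀ c : ℝ, c^2 ≤ 1 →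
        Real.sqrt (p^2+q^2+2*p*q*c) + Real.sqrt (r^2+s^2+2*r*s*c) ≤ 1 := by
      intro c hc
      have hw2 : (Real.sqrt (1-c^2))^2 = 1-c^2 := Real.sq_sqrt (by linarith)
      set u : ℂ := ⟨c, Real.sqrt (1-c^2)⟩ with hu
      have hu1 : ‖u‖ = 1 := by
        rw [Complex.norm_def, Complex.normSq_apply]
        simp only [hu]
        rw [show c*c + Real.sqrt (1-c^2)*Real.sqrt (1-c^2) = 1 by nlinarith [hw2]]
        exact Real.sqrt_one
      have h := L1 u hu1
      rwa [abs_lin p q u hu1, abs_lin r s u hu1, show u.re = c from rfl] at h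
    have L2 : ∀ z : ℂ, ‖z‖ = 1 → ∃ u₁ : ℂ, ‖u₁‖ = 1 ∧
        ‖(p:ℂ)+↑q*u₁‖ + ‖(r:ℂ)+↑s*u₁‖ = 1 ∧
        (z * ↑(‖(p:ℂ)+↑q*u₁‖) = (p:ℂ)+↑q*u₁ ∨
          z * ↑(‖(p:ℂ)+↑q*u₁‖) = -((p:ℂ)+↑q*u₁)) := by
      intro z hz
      obtain ⟨u₁, u₂, h1, h2, hf | hf⟩ := HB z hz.le
      · have hle : ‖(p:ℂ)+↑q*u₁‖ + ‖((r:ℂ)+↑s*u₁)*u₂‖ ≤ 1 := by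
          rw [norm_mul, h2, mul_one]; exact L1 u₁ h1
        obtain ⟨hd, hsum⟩ := tri_eq z _ _ hz (by rw [hf]; ring) hle
        exact ⟨u₁, h1, by rwa [norm_mul, h2, mul_one] at hsum, Or.inl hd⟩
      · have hle : ‖-((p:ℂ)+↑q*u₁)‖ + ‖-(((r:ℂ)+↑s*u₁)*u₂)‖ ≤ 1 := by
          rw [norm_neg, norm_neg, norm_mul, h2, mul_one]; exact L1 u₁ h1
        obtain ⟨hd, hsum⟩ := tri_eq z _ _ hz (by rw [hf]; ring) hle
        rw [norm_neg] at hd hsum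
        rw [norm_neg, norm_mul, h2, mul_one] at hsum
        exact ⟨u₁, h1, hsum, Or.inr hd⟩
    -- zero coverage data
    obtain ⟨v₁, v₂, hv1, hv2, hzero⟩ := HB 0 (by simp)
    have hv1ne : v₁ ≠ 0 := by
      intro h; rw [h] at hv1; simp at hv1
    have hv2ne : v₂ ≠ 0 := by
      intro h; rw [h] at hv2; simp at hv2
    -- data from z = I
    obtain ⟨u₀, hu₀, hsum₀, hdir₀⟩ := L2 I (by simp)
    set c₀ := u₀.re with hc₀'
    set w₀ := u₀.im with hw₀'
    have hcw₀ : c₀^2 + w₀^2 = 1 := unit_re_im u₀ hu₀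
    have hc₀2 : c₀^2 ≤ 1 := by nlinarith [sq_nonneg w₀]
    have hψ₀ : Real.sqrt (p^2+q^2+2*p*q*c₀) + Real.sqrt (r^2+s^2+2*r*s*c₀) = 1 := by
      rwa [abs_lin p q u₀ hu₀, abs_lin r s u₀ hu₀] at hsum₀
    have hpc₀ : p + q*c₀ = 0 := by
      rcases hdir₀ with h | h
      · have hre := congrArg Complex.re h
        simp [Complex.mul_re] at hre
        linarith
      · have hre := congrArg Complex.re h
        simp [Complex.mul_re] at hre
        linarith
    by_cases hq : q = 0
    · -- case q = 0 : conclude p = 0, r,s = ±1/2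
      have hp0 : p = 0 := by rw [hq] at hpc₀; linarith
      have hQc₀ : r^2+s^2+2*r*s*c₀ = 1 := by
        rw [hp0, hq] at hψ₀
        norm_num at hψ₀
        exact hψ₀
      -- zero coverage gives r² = s²
      have hrs : r^2 = s^2 := by
        have hfac : ((r:ℂ) + ↑s*v₁) * v₂ = 0 := by
          rcases hzero with h | h
          · rw [hp0, hq] at h; push_cast at h; linear_combination -h
          · rw [hp0, hq] at h; push_cast at h; linear_combination h
        have hrv : (r:ℂ) + ↑s*v₁ = 0 := by
          rcases mul_eq_zero.mp hfac with h | h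
          · exact h
          · exact absurd h hv2ne
        have habs0 : Real.sqrt (r^2+s^2+2*r*s*v₁.re) = 0 := by
          rw [← abs_lin r s v₁ hv1, hrv, norm_zero]
        have hc2 : v₁.re^2 ≤ 1 := by nlinarith [unit_re_im v₁ hv1, sq_nonneg v₁.im]
        have h00 : r^2+s^2+2*r*s*v₁.re = 0 := by
          have h1 := Real.sqrt_eq_zero'.mp habs0
          have h2 := Pnonneg r s v₁.re hc2
          linarith
        exact sq_eq_from r s v₁.re hc2 h00
      -- L1R at 1 and -1
      have hL1 : (r+s)^2 ≤ 1 := by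
        have h := L1R 1 (by norm_num)
        rw [hp0, hq] at h
        norm_num at h
        have h2 := Real.sq_sqrt (Pnonneg r s 1 (by norm_num))
        nlinarith [Real.sqrt_nonneg (r^2+s^2+2*r*s*1), h, h2]
      have hL2 : (r-s)^2 ≤ 1 := by
        have h := L1R (-1) (by norm_num)
        rw [hp0, hq] at h
        norm_num at h
        have h2 := Real.sq_sqrt (Pnonneg r s (-1) (by norm_num))
        nlinarith [Real.sqrt_nonneg (r^2+s^2+2*r*s*(-1)), h, h2]
      have hr4 : r^2 = 1/4 ∧ s^2 = 1/4 := by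
        have hss : (s-r)*(s+r) = 0 := by linear_combination -hrs
        rcases mul_eq_zero.mp hss with h | h
        · have hsr : s = r := by linarith
          have e1 : 2*r^2*(1+c₀) = 1 := by rw [hsr] at hQc₀; linarith [hQc₀]
          have e2 : 4*r^2 ≤ 1 := by rw [hsr] at hL1; nlinarith [hL1]
          have e3 : 1 ≤ 4*r^2 := by nlinarith [e1, hc₀2, sq_nonneg r, mul_nonneg (sq_nonneg r) (by nlinarith : (0:ℝ) ≤ 1 - c₀)]
          constructor
          · linarith
          · rw [hsr]; linarith
        · have hsr : s = -r := by linarith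
          have e1 : 2*r^2*(1-c₀) = 1 := by rw [hsr] at hQc₀; linarith [hQc₀]
          have e2 : 4*r^2 ≤ 1 := by rw [hsr] at hL2; nlinarith [hL2]
          have e3 : 1 ≤ 4*r^2 := by nlinarith [e1, hc₀2, sq_nonneg r, mul_nonneg (sq_nonneg r) (by nlinarith : (0:ℝ) ≤ 1 + c₀)]
          constructor
          · linarith
          · rw [hsr]; linarith
      refine ⟨hp0, Or.inl ⟨hq, ?_, ?_⟩⟩
      · have : (r - 1/2)*(r + 1/2) = 0 := by linear_combination hr4.1
        rcases mul_eq_zero.mp this with h | h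
        · left; linarith
        · right; linarith
      · have : (s - 1/2)*(s + 1/2) = 0 := by linear_combination hr4.2
        rcases mul_eq_zero.mp this with h | h
        · left; linarith
        · right; linarith
    · -- case q ≠ 0
      -- data from z = 3/5 + 4/5 I
      obtain ⟨u₁, hu₁, hsum₁, hdir₁⟩ := L2 ((3/5 : ℂ) + (4/5)*I) (by
        simp [Complex.norm_def, Complex.normSq_apply]; norm_num)
      set c₁ := u₁.re with hc₁'
      set w₁ := u₁.im with hw₁'
      have hcw₁ : c₁^2 + w₁^2 = 1 := unit_re_im u₁ hu₁
      have hc₁2 : c₁^2 ≤ 1 := by nlinarith [sq_nonneg w₁]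
      have hψ₁ : Real.sqrt (p^2+q^2+2*p*q*c₁) + Real.sqrt (r^2+s^2+2*r*s*c₁) = 1 := by
        rwa [abs_lin p q u₁ hu₁, abs_lin r s u₁ hu₁] at hsum₁
      have h45 : 4*(p + q*c₁) = 3*(q*w₁) := by
        rcases hdir₁ with h | h
        · have hre := congrArg Complex.re h
          have him := congrArg Complex.im h
          simp [Complex.mul_re, Complex.mul_im] at hre him
          norm_num at hre him
          linarith
        · have hre := congrArg Complex.re h
          have him := congrArg Complex.im h
          simp [Complex.mul_re, Complex.mul_im] at hre him
          norm_num at hre him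
          linarith
      by_cases hcc : c₁ = c₀
      · -- degenerate: contradiction via contra_lem
        exfalso
        have hpc₁ : p + q*c₁ = 0 := by rw [hcc]; exact hpc₀
        have hw₁0 : w₁ = 0 := by
          have : 3*(q*w₁) = 0 := by linarith
          have h2 : q*w₁ = 0 := by linarith
          rcases mul_eq_zero.mp h2 with h | h
          · exact absurd h hq
          · exact h
        have hc₁sq : c₁^2 = 1 := by rw [hw₁0] at hcw₁; linarith
        have hε : c₁ = 1 ∨ c₁ = -1 := by
          have : (c₁-1)*(c₁+1) = 0 := by linear_combination hc₁sq
          rcases mul_eq_zero.mp this with h | h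
          · left; linarith
          · right; linarith
        have hP1 : p^2+q^2+2*p*q*c₁ = 0 := by
          linear_combination (p + q*c₁)*hpc₁ - q^2*hc₁sq
        have hQ1 : r^2+s^2+2*r*s*c₁ = 1 := by
          rw [hP1] at hψ₁
          rw [Real.sqrt_zero] at hψ₁
          have h0 : Real.sqrt (r^2+s^2+2*r*s*c₁) = 1 := by linarith
          have := Real.sq_sqrt (Pnonneg r s c₁ hc₁2)
          rw [h0] at this
          linarith
        exact contra_lem p q r s c₁ hε hq (by linarith) hQ1 L1R
      · -- midpoint argument
        obtain ⟨hPP, hQQ⟩ := mid_eq (p^2+q^2+2*p*q*c₀) (p^2+q^2+2*p*q*c₁)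
          (r^2+s^2+2*r*s*c₀) (r^2+s^2+2*r*s*c₁)
          (Pnonneg p q c₀ hc₀2) (Pnonneg p q c₁ hc₁2)
          (Pnonneg r s c₀ hc₀2) (Pnonneg r s c₁ hc₁2)
          hψ₀ hψ₁ (by
            have h := L1R ((c₀+c₁)/2) (by nlinarith)
            rw [show p^2+q^2+2*p*q*((c₀+c₁)/2) = ((p^2+q^2+2*p*q*c₀)+(p^2+q^2+2*p*q*c₁))/2 by ring,
              show r^2+s^2+2*r*s*((c₀+c₁)/2) = ((r^2+s^2+2*r*s*c₀)+(r^2+s^2+2*r*s*c₁))/2 by ring] at h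
            exact h)
        have hpq0 : p*q = 0 := by
          have h1 : 2*(p*q)*(c₀-c₁) = 0 := by linear_combination hPP
          rcases mul_eq_zero.mp h1 with h | h
          · rcases mul_eq_zero.mp h with h' | h'
            · norm_num at h'
            · exact h'
          · exact absurd (by linarith : c₁ = c₀) hcc
        have hrs0 : r*s = 0 := by
          have h1 : 2*(r*s)*(c₀-c₁) = 0 := by linear_combination hQQ
          rcases mul_eq_zero.mp h1 with h | h
          · rcases mul_eq_zero.mp h with h' | h'
            · norm_num at h'
            · exact h'
          · exact absurd (by linarith : c₁ = c₀) hcc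
        have hp0 : p = 0 := by
          rcases mul_eq_zero.mp hpq0 with h | h
          · exact h
          · exact absurd h hq
        have hc₀0 : c₀ = 0 := by
          rw [hp0] at hpc₀
          have : q*c₀ = 0 := by linarith
          rcases mul_eq_zero.mp this with h | h
          · exact absurd h hq
          · exact h
        have hqs : |q| + Real.sqrt (r^2+s^2) = 1 := by
          rw [hp0, hc₀0] at hψ₀
          rw [show (0:ℝ)^2+q^2+2*0*q*0 = q^2 by ring, show r^2+s^2+2*r*s*0 = r^2+s^2 by ring,
            Real.sqrt_sq_eq_abs] at hψ₀
          exact hψ₀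
        rcases mul_eq_zero.mp hrs0 with hr0 | hs0
        · -- r = 0 : second disjunct
          have hqs1 : |q| + |s| = 1 := by
            rw [hr0] at hqs
            rw [show (0:ℝ)^2+s^2 = s^2 by ring, Real.sqrt_sq_eq_abs] at hqs
            exact hqs
          have hq2s2 : q^2 = s^2 := by
            have hfac : v₁ * ((q:ℂ) + ↑s*v₂) = 0 := by
              rcases hzero with h | h
              · rw [hp0, hr0] at h; push_cast at h; linear_combination -h
              · rw [hp0, hr0] at h; push_cast at h; linear_combination h
            have hqv : (q:ℂ) + ↑s*v₂ = 0 := by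
              rcases mul_eq_zero.mp hfac with h | h
              · exact absurd h hv1ne
              · exact h
            have habs0 : Real.sqrt (q^2+s^2+2*q*s*v₂.re) = 0 := by
              rw [← abs_lin q s v₂ hv2, hqv, norm_zero]
            have hc2 : v₂.re^2 ≤ 1 := by nlinarith [unit_re_im v₂ hv2, sq_nonneg v₂.im]
            have h00 : q^2+s^2+2*q*s*v₂.re = 0 := by
              have h1 := Real.sqrt_eq_zero'.mp habs0
              have h2 := Pnonneg q s v₂.re hc2
              linarith
            exact sq_eq_from q s v₂.re hc2 h00
          have habsq : |q| = |s| := by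
            rw [← Real.sqrt_sq_eq_abs, ← Real.sqrt_sq_eq_abs, hq2s2]
          have hqh : |q| = 1/2 := by linarith
          have hsh : |s| = 1/2 := by linarith
          refine ⟨hp0, Or.inr (Or.inl ⟨hr0, ?_, ?_⟩)⟩
          · rcases abs_eq (by norm_num : (0:ℝ) ≤ 1/2) |>.mp hqh with h | h
            · left; linarith
            · right; linarith
          · rcases abs_eq (by norm_num : (0:ℝ) ≤ 1/2) |>.mp hsh with h | h
            · left; linarith
            · right; linarith
        · -- s = 0 : third disjunct
          have hqs1 : |q| + |r| = 1 := by
            rw [hs0] at hqs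
            rw [show r^2+(0:ℝ)^2 = r^2 by ring, Real.sqrt_sq_eq_abs] at hqs
            exact hqs
          have hq2r2 : |q| = |r| := by
            have hfac : (q:ℂ)*v₁ = -(↑r*v₂) := by
              rcases hzero with h | h
              · rw [hp0, hs0] at h; push_cast at h; linear_combination -h
              · rw [hp0, hs0] at h; push_cast at h; linear_combination h
            have habs := congrArg (‖·‖) hfac
            rw [norm_mul, norm_neg, norm_mul, hv1, hv2, mul_one, mul_one,
              Complex.norm_real, Real.norm_eq_abs, Complex.norm_real, Real.norm_eq_abs] at habs
            exact habs
          have hqh : |q| = 1/2 := by linarith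
          have hrh : |r| = 1/2 := by linarith
          refine ⟨hp0, Or.inr (Or.inr ⟨hs0, ?_, ?_⟩)⟩
          · rcases abs_eq (by norm_num : (0:ℝ) ≤ 1/2) |>.mp hqh with h | h
            · left; linarith
            · right; linarith
          · rcases abs_eq (by norm_num : (0:ℝ) ≤ 1/2) |>.mp hrh with h | h
            · left; linarith
            · right; linarith

  · -- reverse direction
    rintro ⟨hp0, hcase⟩
    have habs1 : |b₀₀| + |b₀₁| + |b₁₀| + |b₁₁| = 1 := by
      rcases hcase with ⟨h1',h2',h3'⟩|⟨h1',h2',h3'⟩|⟨h1',h2',h3'⟩ <;>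
        rcases h2' with h2'|h2' <;> rcases h3' with h3'|h3' <;>
        rw [hp0,h1',h2',h3'] <;> norm_num [abs_of_pos]
    have hb : ∀ u₁ u₂ : ℂ, ‖u₁‖ = 1 → ‖u₂‖ = 1 →
        ‖↑b₀₀ + ↑b₀₁*u₁ + ↑b₁₀*u₂ + ↑b₁₁*(u₁*u₂)‖ ≤ 1 := by
      intro u₁ u₂ h1 h2
      have t0 : ‖(b₀₀:ℂ)‖ = |b₀₀| := by rw [Complex.norm_real, Real.norm_eq_abs]
      have t1 : ‖(b₀₁:ℂ)*u₁‖ = |b₀₁| := by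
        rw [norm_mul, h1, Complex.norm_real, Real.norm_eq_abs, mul_one]
      have t2 : ‖(b₁₀:ℂ)*u₂‖ = |b₁₀| := by
        rw [norm_mul, h2, Complex.norm_real, Real.norm_eq_abs, mul_one]
      have t3 : ‖(b₁₁:ℂ)*(u₁*u₂)‖ = |b₁₁| := by
        rw [norm_mul, norm_mul, h1, h2, Complex.norm_real, Real.norm_eq_abs]; ring
      calc ‖↑b₀₀ + ↑b₀₁*u₁ + ↑b₁₀*u₂ + ↑b₁₁*(u₁*u₂)‖
          ≤ ‖↑b₀₀ + ↑b₀₁*u₁ + ↑b₁₀*u₂‖ + ‖(b₁₁:ℂ)*(u₁*u₂)‖ :=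
            norm_add_le _ _
        _ ≤ ‖↑b₀₀ + ↑b₀₁*u₁‖ + ‖(b₁₀:ℂ)*u₂‖ +
              ‖(b₁₁:ℂ)*(u₁*u₂)‖ := by
            have := norm_add_le ((b₀₀:ℂ) + ↑b₀₁*u₁) ((b₁₀:ℂ)*u₂)
            linarith
        _ ≤ ‖(b₀₀:ℂ)‖ + ‖(b₀₁:ℂ)*u₁‖ + ‖(b₁₀:ℂ)*u₂‖ +
              ‖(b₁₁:ℂ)*(u₁*u₂)‖ := by
            have := norm_add_le ((b₀₀:ℂ)) ((b₀₁:ℂ)*u₁)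
            linarith
        _ = 1 := by rw [t0, t1, t2, t3]; exact habs1
    ext z
    simp only [Set.mem_setOf_eq]
    constructor
    · rintro ⟨u₁, u₂, h1, h2, hf | hf⟩
      · rw [hf]; exact hb u₁ u₂ h1 h2
      · rw [hf, norm_neg]; exact hb u₁ u₂ h1 h2
    · intro hz
      rcases hcase with ⟨hq0, hr, hs⟩ | ⟨hr0, hq, hs⟩ | ⟨hs0, hq, hr⟩
      · have hr2 : b₁₀^2 = 1/4 := by rcases hr with h|h <;> rw [h] <;> norm_num
        have hs2 : b₁₁^2 = 1/4 := by rcases hs with h|h <;> rw [h] <;> norm_num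
        obtain ⟨u, v, hu, hv, hzz⟩ := cover1 b₁₀ b₁₁ hr2 hs2 z hz
        refine ⟨v, u, hv, hu, Or.inl ?_⟩
        rw [hp0, hq0]
        push_cast
        linear_combination hzz
      · have hq2 : b₀₁^2 = 1/4 := by rcases hq with h|h <;> rw [h] <;> norm_num
        have hs2 : b₁₁^2 = 1/4 := by rcases hs with h|h <;> rw [h] <;> norm_num
        obtain ⟨u, v, hu, hv, hzz⟩ := cover1 b₀₁ b₁₁ hq2 hs2 z hz
        refine ⟨u, v, hu, hv, Or.inl ?_⟩
        rw [hp0, hr0]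
        push_cast
        linear_combination hzz
      · have hq2 : b₀₁^2 = 1/4 := by rcases hq with h|h <;> rw [h] <;> norm_num
        have hr2 : b₁₀^2 = 1/4 := by rcases hr with h|h <;> rw [h] <;> norm_num
        obtain ⟨u₁, u₂, h1, h2, hzz⟩ := cover2 b₀₁ b₁₀ hq2 hr2 z hz
        refine ⟨u₁, u₂, h1, h2, Or.inl ?_⟩
        rw [hp0, hs0]
        push_cast
        linear_combination hzz
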